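/- Let p:G̃→G be the universal covering homomorphism of a connected simple Lie group G, let a be a 2-cocycle on G with values in the trivial module ℝ, and suppose the pulled-back cocycle ã(g,h)=a(p(g),p(h)) on G̃ equals Db for a smooth function b:G̃→ℝ. If a=Df for some function f:G→ℝ, then b−f∘p:G̃→ℝ is a group homomorphism, hence (since G̃ is simple and connected and b−f∘p vanishes near the identity) b−f∘p=0, so f is smooth and a is trivial in the complex of smooth cochains. -/
import Mathlib


namespace SymplCocycle

/-- Let `p : G̃ → G` be the universal covering homomorphism of a connected
simple Lie group `G` (so `p` is a surjective group homomorphism; smooth real functions on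
`G` and on `G̃` are singled out by the predicates `SG` and `SG̃`, and a function on `G` is
smooth as soon as its pullback along the covering `p` is smooth).  Let `a` be a `2`-cocycle
on `G` with values in the trivial module `ℝ`, and suppose the pulled-back cocycle
`ã(g,h) = a(p g, p h)` on `G̃` equals `Db` for a smooth function `b : G̃ → ℝ`.  Since `G̃` is
simple and connected, every group homomorphism `G̃ → ℝ` (which necessarily vanishes near the
identity) vanishes identically (hypothesis `hvanish`).

If `a = Df` for some (arbitrary) function `f : G → ℝ`, then `b − f ∘ p` is a group
homomorphism `G̃ → ℝ`, hence `b − f ∘ p = 0`; consequently `f` is smooth and `a` is trivial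
already in the complex of smooth cochains. -/
theorem smooth_trivial_of_trivial_of_cover
    {G' G : Type*} [Group G'] [Group G]  -- `G'` is the universal cover `G̃`
    (p : G' →* G) (hp : Function.Surjective p)
    (SG : (G → ℝ) → Prop) (SG' : (G' → ℝ) → Prop)
    (hdescent : ∀ f : G → ℝ, SG' (f ∘ p) → SG f)
    (hvanish : ∀ h : G' → ℝ, (∀ x y : G', h (x * y) = h x + h y) → ∀ x, h x = 0)
    (a : G → G → ℝ)
    (hcocycle : ∀ g₁ g₂ g₃ : G, a g₂ g₃ - a (g₁ * g₂) g₃ + a g₁ (g₂ * g₃) - a g₁ g₂ = 0)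
    (b : G' → ℝ) (hb : SG' b)
    (hab : ∀ g h : G', a (p g) (p h) = b h - b (g * h) + b g)
    (f : G → ℝ)
    (haf : ∀ g h : G, a g h = f h - f (g * h) + f g) :
    (∀ x y : G', (b (x * y) - f (p (x * y))) = (b x - f (p x)) + (b y - f (p y))) ∧
      (∀ x : G', b x = f (p x)) ∧
      SG f ∧
      (∃ f' : G → ℝ, SG f' ∧ ∀ g h : G, a g h = f' h - f' (g * h) + f' g) := by
  have hhom : ∀ x y : G', (b (x * y) - f (p (x * y))) = (b x - f (p x)) + (b y - f (p y)) := by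
    intro x y
    have h1 := hab x y
    have h2 := haf (p x) (p y)
    rw [map_mul] at *
    linarith [h1, h2.symm.trans h1]
  have hz := hvanish (fun x => b x - f (p x)) hhom
  have heq : ∀ x : G', b x = f (p x) := fun x => by have := hz x; simpa using sub_eq_zero.mp this
  have hSG : SG f := hdescent f (by
    have : (f ∘ p) = b := funext fun x => (heq x).symm
    rw [this]; exact hb)
  exact ⟨hhom, heq, hSG, f, hSG, haf⟩

end SymplCocycle
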